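/- Let F : ℝ → ℝ be nondecreasing, right-continuous, with infimum 0 and supremum 1, let μ be a probability measure on a measurable space Z, let f : Z → ℝ be Borel with f_*μ = ν_F, and suppose f = F^{(-1)} ∘ α for a Borel function α : Z → (0,1) with α_*μ = λ_{(0,1)}. Then for all reals a < b: μ(f⁻¹((a,b])) = 0 if and only if f⁻¹((a,b]) = ∅. -/

import Mathlib

open MeasureTheory Set

/-- The quasi-inverse (quantile function) of a cumulative distribution function:
`F⁽⁻¹⁾(s) = inf { r : F r ≥ s }`. -/
noncomputable def quasiInverse (F : ℝ → ℝ) (s : ℝ) : ℝ := sInf {r : ℝ | s ≤ F r}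

/-- If `f : Z → ℝ` is Borel with `f_*μ = ν_F` and `f = F⁽⁻¹⁾ ∘ α` for a
probability barrier `α` (Borel, `(0,1)`-valued, `α_*μ = λ_{(0,1)}`), then for all reals
`a < b` the set `f⁻¹((a,b])` is `μ`-null iff it is empty. -/
theorem preimage_Ioc_null_iff_empty
    {Z : Type*} [MeasurableSpace Z] (μ : Measure Z) [IsProbabilityMeasure μ]
    (F : ℝ → ℝ) (hmono : Monotone F)
    (hrc : ∀ x : ℝ, ContinuousWithinAt F (Ici x) x)
    (hinf : ⨅ r : ℝ, F r = 0) (hsup : ⨆ r : ℝ, F r = 1)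
    (f : Z → ℝ) (hf : Measurable f)
    (hpush : Measure.map f μ =
      ({ toFun := F, mono' := hmono, right_continuous' := hrc } :
        StieltjesFunction ℝ).measure)
    (α : Z → ℝ) (hα : Measurable α) (hα01 : ∀ z : Z, α z ∈ Ioo (0 : ℝ) 1)
    (hαpush : Measure.map α μ = volume.restrict (Ioo (0 : ℝ) 1))
    (hfα : ∀ z : Z, f z = quasiInverse F (α z)) :
    ∀ a b : ℝ, a < b → (μ (f ⁻¹' Ioc a b) = 0 ↔ f ⁻¹' Ioc a b = ∅) := by
  intro a b hab
  set G : StieltjesFunction ℝ :=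
    { toFun := F, mono' := hmono, right_continuous' := hrc } with hG
  have hμS : μ (f ⁻¹' Ioc a b) = ENNReal.ofReal (F b - F a) := by
    have h1 : μ (f ⁻¹' Ioc a b) = Measure.map f μ (Ioc a b) :=
      (Measure.map_apply hf (measurableSet_Ioc (a := a) (b := b))).symm
    rw [h1, hpush, G.measure_Ioc]
  constructor
  · intro h0
    by_contra hne
    obtain ⟨z, hz⟩ := nonempty_iff_ne_empty.2 hne
    obtain ⟨hz1, hz2⟩ := hz
    have hzα := hα01 z
    -- the set defining the quasi-inverse
    set S : Set ℝ := {r : ℝ | α z ≤ F r} with hS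
    have hSne : S.Nonempty := by
      obtain ⟨r, hr⟩ := exists_lt_of_lt_ciSup (hsup ▸ hzα.2)
      exact ⟨r, le_of_lt hr⟩
    have hSbdd : BddBelow S := by
      obtain ⟨r0, hr0⟩ := exists_lt_of_ciInf_lt (f := F) (hinf ▸ hzα.1)
      refine ⟨r0, fun r hr => ?_⟩
      by_contra hlt
      exact absurd (le_trans hr (hmono (le_of_not_ge hlt))) (not_le.2 hr0)
    have hfz : f z = sInf S := hfα z
    -- F a < α z
    have hFa : F a < α z := by
      by_contra hle
      have : a ∈ S := le_of_not_gt hle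
      have := csInf_le hSbdd this
      rw [← hfz] at this
      exact absurd hz1 (not_lt.2 this)
    -- α z ≤ F b
    have hFb : α z ≤ F b := by
      have hIoi : ∀ x ∈ Ioi b, α z ≤ F x := by
        intro x hx
        have : sInf S < x := lt_of_le_of_lt (hfz ▸ hz2) hx
        obtain ⟨r, hrS, hrx⟩ := exists_lt_of_csInf_lt hSne this
        exact le_trans hrS (hmono hrx.le)
      have htend : Filter.Tendsto F (nhdsWithin b (Ioi b)) (nhds (F b)) :=
        (hrc b).mono_left (nhdsWithin_mono b Ioi_subset_Ici_self)
      exact ge_of_tendsto htend (eventually_nhdsWithin_of_forall hIoi)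
    have : F b ≤ F a := by
      have := hμS ▸ h0
      have h' : F b - F a ≤ 0 := by
        by_contra hpos
        exact absurd this (by simp [ENNReal.ofReal_eq_zero, not_le.2 (lt_of_not_ge hpos)])
      linarith
    linarith
  · intro h
    rw [h]
    simp
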